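/- Let M be sufficient, B a complementary basis, i ∈ B, and suppose B′ = B\{i} ∪ {ī} is also a basis (where ī is the complementary index of i). Then 𝒞(B) ∩ 𝒞(B′) = 𝒞(B\{i}), this is a common facet of both cones, and no other full-dimensional complementary cone intersects the relative interior of 𝒞(B\{i}). -/

import Mathlib

open Matrix

/-- `M` is column sufficient. -/
def ColSuff {n : ℕ} (M : Matrix (Fin n) (Fin n) ℝ) : Prop :=
  ∀ z : Fin n → ℝ, (∀ i, z i * M.mulVec z i ≤ 0) → ∀ i, z i * M.mulVec z i = 0

/-- `M` is sufficient: both `M` and `Mᵀ` are column sufficient. -/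
def Suff {n : ℕ} (M : Matrix (Fin n) (Fin n) ℝ) : Prop := ColSuff M ∧ ColSuff Mᵀ

/-- The matrix `A = [I, -M]`, with columns indexed by `Fin n ⊕ Fin n`. -/
def Amat {n : ℕ} (M : Matrix (Fin n) (Fin n) ℝ) : Matrix (Fin n) (Fin n ⊕ Fin n) ℝ :=
  Matrix.fromCols 1 (-M)

/-- The complementary index. -/
def bar {n : ℕ} : Fin n ⊕ Fin n → Fin n ⊕ Fin n
  | .inl i => .inr i
  | .inr i => .inl i

/-- `B` is a basis of `A = [I, -M]`: `n` linearly independent columns. -/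
def IsBasis {n : ℕ} (M : Matrix (Fin n) (Fin n) ℝ) (B : Finset (Fin n ⊕ Fin n)) : Prop :=
  B.card = n ∧ LinearIndependent ℝ (fun j : B => (Amat M)ᵀ (j : Fin n ⊕ Fin n))

/-- A complementary basis: a basis containing exactly one of each complementary pair. -/
def IsComplBasis {n : ℕ} (M : Matrix (Fin n) (Fin n) ℝ) (B : Finset (Fin n ⊕ Fin n)) : Prop :=
  IsBasis M B ∧ ∀ i : Fin n, Xor' (Sum.inl i ∈ B) (Sum.inr i ∈ B)

/-- The complementary cone `𝒞(J)`: nonnegative combinations of the columns of `A` indexed by `J`. -/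
def coneOf {n : ℕ} (M : Matrix (Fin n) (Fin n) ℝ) (J : Finset (Fin n ⊕ Fin n)) :
    Set (Fin n → ℝ) :=
  {y | ∃ c : Fin n ⊕ Fin n → ℝ, (∀ j, 0 ≤ c j) ∧ (∀ j ∉ J, c j = 0) ∧ y = (Amat M).mulVec c}
section Aux

variable {n : ℕ}

lemma bar_ne (i : Fin n ⊕ Fin n) : bar i ≠ i := by cases i <;> simp [bar]

lemma bar_bar (i : Fin n ⊕ Fin n) : bar (bar i) = i := by cases i <;> simp [bar]

lemma not_both {M : Matrix (Fin n) (Fin n) ℝ} {B : Finset (Fin n ⊕ Fin n)}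
    (hB : IsComplBasis M B) {i : Fin n ⊕ Fin n} (h1 : i ∈ B) (h2 : bar i ∈ B) : False := by
  cases i with
  | inl k => rcases hB.2 k with h | h
             · exact h.2 h2
             · exact h.2 h1
  | inr k => rcases hB.2 k with h | h
             · exact h.2 h1
             · exact h.2 h2

lemma one_of_pair {M : Matrix (Fin n) (Fin n) ℝ} {B : Finset (Fin n ⊕ Fin n)}
    (hB : IsComplBasis M B) (j : Fin n ⊕ Fin n) : j ∈ B ∨ bar j ∈ B := by
  cases j with
  | inl k => rcases hB.2 k with h | h
             · exact Or.inl h.1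
             · exact Or.inr h.1
  | inr k => rcases hB.2 k with h | h
             · exact Or.inr h.1
             · exact Or.inl h.1

lemma amulVec (M : Matrix (Fin n) (Fin n) ℝ) (c : Fin n ⊕ Fin n → ℝ) :
    (Amat M).mulVec c = (fun k => c (Sum.inl k)) - M.mulVec (fun k => c (Sum.inr k)) := by
  have hc : c = Sum.elim (fun k => c (Sum.inl k)) (fun k => c (Sum.inr k)) := by
    funext j; cases j <;> rfl
  rw [Amat]
  nth_rewrite 1 [hc]
  rw [Matrix.fromCols_mulVec_sumElim, Matrix.one_mulVec, Matrix.neg_mulVec,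
    ← sub_eq_add_neg]

lemma mulVec_eq_sum (M : Matrix (Fin n) (Fin n) ℝ) (c : Fin n ⊕ Fin n → ℝ) :
    (Amat M).mulVec c = ∑ j, c j • (Amat M)ᵀ j := by
  funext k
  simp [Matrix.mulVec, dotProduct, Finset.sum_apply, Matrix.transpose_apply, mul_comm]

lemma sum_subtype (M : Matrix (Fin n) (Fin n) ℝ) (B : Finset (Fin n ⊕ Fin n))
    (c : Fin n ⊕ Fin n → ℝ) (hc : ∀ j ∉ B, c j = 0) :
    (Amat M).mulVec c = ∑ j : B, c j • (Amat M)ᵀ (j : Fin n ⊕ Fin n) := by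
  rw [mulVec_eq_sum,
    show (∑ j : B, c (j : Fin n ⊕ Fin n) • (Amat M)ᵀ (j : Fin n ⊕ Fin n))
        = ∑ j ∈ B, c j • (Amat M)ᵀ j from
      Finset.sum_coe_sort B (fun j => c j • (Amat M)ᵀ j)]
  exact (Finset.sum_subset (Finset.subset_univ B)
    (fun j _ hj => by rw [hc j hj, zero_smul])).symm

lemma basis_supp_zero {M : Matrix (Fin n) (Fin n) ℝ} {B : Finset (Fin n ⊕ Fin n)}
    (hB : IsBasis M B) {d : Fin n ⊕ Fin n → ℝ} (hd : ∀ j ∉ B, d j = 0)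
    (h : (Amat M).mulVec d = 0) : d = 0 := by
  have h2 : ∑ j : B, (fun j : B => d j) j • (Amat M)ᵀ (j : Fin n ⊕ Fin n) = 0 := by
    rw [← sum_subtype M B d hd]; exact h
  have h3 := Fintype.linearIndependent_iff.mp hB.2 (fun j : B => d j) h2
  funext j
  by_cases hj : j ∈ B
  · exact h3 ⟨j, hj⟩
  · exact hd j hj

lemma repr_unique {M : Matrix (Fin n) (Fin n) ℝ} {B : Finset (Fin n ⊕ Fin n)}
    (hB : IsBasis M B) {c c' : Fin n ⊕ Fin n → ℝ} (hc : ∀ j ∉ B, c j = 0)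
    (hc' : ∀ j ∉ B, c' j = 0) (h : (Amat M).mulVec c = (Amat M).mulVec c') : c = c' := by
  have h0 := basis_supp_zero hB (d := c - c')
    (fun j hj => by simp [Pi.sub_apply, hc j hj, hc' j hj])
    (by rw [Matrix.mulVec_sub, h, sub_self])
  funext j
  have := congrFun h0 j
  simpa [sub_eq_zero] using this

lemma basis_repr {M : Matrix (Fin n) (Fin n) ℝ} {B : Finset (Fin n ⊕ Fin n)}
    (hB : IsBasis M B) (y : Fin n → ℝ) :
    ∃ d, (∀ j ∉ B, d j = 0) ∧ (Amat M).mulVec d = y := by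
  have hspan : Submodule.span ℝ (Set.range (fun j : B => (Amat M)ᵀ (j : Fin n ⊕ Fin n))) = ⊤ := by
    apply Submodule.eq_top_of_finrank_eq
    rw [finrank_span_eq_card hB.2, Fintype.card_coe, hB.1,
      Module.finrank_fintype_fun_eq_card, Fintype.card_fin]
  have hy : y ∈ Submodule.span ℝ (Set.range (fun j : B => (Amat M)ᵀ (j : Fin n ⊕ Fin n))) := by
    rw [hspan]; exact Submodule.mem_top
  obtain ⟨c, hc⟩ := (Submodule.mem_span_range_iff_exists_fun ℝ).mp hy
  refine ⟨fun j => if h : j ∈ B then c ⟨j, h⟩ else 0, fun j hj => dif_neg hj, ?_⟩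
  rw [sum_subtype M B _ (fun j hj => dif_neg hj), ← hc]
  exact Finset.sum_congr rfl (fun j _ => by rw [dif_pos j.2])

lemma mulVec_ite (M : Matrix (Fin n) (Fin n) ℝ) (j : Fin n ⊕ Fin n) (t : ℝ) :
    (Amat M).mulVec (fun j' => if j' = j then t else 0) = t • (Amat M)ᵀ j := by
  rw [mulVec_eq_sum, Finset.sum_eq_single j]
  · rw [if_pos rfl]
  · intro b _ hb; rw [if_neg hb, zero_smul]
  · intro h; exact absurd (Finset.mem_univ j) h

lemma zero_mem_cone (M : Matrix (Fin n) (Fin n) ℝ) (J : Finset (Fin n ⊕ Fin n)) :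
    (0 : Fin n → ℝ) ∈ coneOf M J :=
  ⟨0, fun j => le_refl 0, fun j _ => rfl, by rw [Matrix.mulVec_zero]⟩

lemma col_mem_cone (M : Matrix (Fin n) (Fin n) ℝ) {J : Finset (Fin n ⊕ Fin n)}
    {j : Fin n ⊕ Fin n} (hj : j ∈ J) : (Amat M)ᵀ j ∈ coneOf M J := by
  refine ⟨fun j' => if j' = j then 1 else 0, ?_, ?_, by rw [mulVec_ite, one_smul]⟩
  · intro j'; by_cases h : j' = j <;> simp [h]
  · intro j' hj'; exact if_neg (fun h => hj' (by rw [h]; exact hj))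

lemma cone_mono (M : Matrix (Fin n) (Fin n) ℝ) {J J' : Finset (Fin n ⊕ Fin n)} (h : J ⊆ J') :
    coneOf M J ⊆ coneOf M J' := by
  rintro y ⟨c, h1, h2, h3⟩
  exact ⟨c, h1, fun j hj => h2 j (fun hjJ => hj (h hjJ)), h3⟩

end Aux
section Key
variable {n : ℕ}

lemma key_rel {M : Matrix (Fin n) (Fin n) ℝ} (hM : ColSuff M) {B : Finset (Fin n ⊕ Fin n)}
    (hB : IsComplBasis M B) {i : Fin n ⊕ Fin n} (hi : i ∈ B)
    (hB' : IsBasis M (insert (bar i) (B.erase i))) :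
    ∃ r : Fin n ⊕ Fin n → ℝ, (∀ j, j ∉ B → j ≠ bar i → r j = 0) ∧
      r (bar i) = -1 ∧ (Amat M).mulVec r = 0 ∧ r i < 0 := by
  obtain ⟨d, hd0, hd⟩ := basis_repr hB.1 ((Amat M)ᵀ (bar i))
  set r : Fin n ⊕ Fin n → ℝ := fun j => d j - if j = bar i then 1 else 0 with hr
  have hbarB : bar i ∉ B := fun h => not_both hB hi h
  have hrbar : r (bar i) = -1 := by simp [hr, hd0 _ hbarB]
  have hrsupp : ∀ j, j ∉ B → j ≠ bar i → r j = 0 := by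
    intro j hj hjb; simp [hr, hd0 _ hj, hjb]
  have hri : r i = d i := by simp [hr, Ne.symm (bar_ne i)]
  have hAr : (Amat M).mulVec r = 0 := by
    have hre : r = d - fun j => if j = bar i then (1:ℝ) else 0 := rfl
    rw [hre, Matrix.mulVec_sub, hd, mulVec_ite, one_smul, sub_self]
  have hne : d i ≠ 0 := by
    intro h0
    have hsupp' : ∀ j ∉ insert (bar i) (B.erase i), r j = 0 := by
      intro j hj
      rw [Finset.mem_insert, Finset.mem_erase] at hj
      push_neg at hj
      obtain ⟨hj1, hj2⟩ := hj
      by_cases hji : j = i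
      · rw [hji, hri, h0]
      · exact hrsupp j (fun hjB => hj2 hji hjB) hj1
    have h := basis_supp_zero hB' hsupp' hAr
    rw [h] at hrbar
    norm_num at hrbar
  have hle : d i ≤ 0 := by
    by_contra hpos
    push_neg at hpos
    have hMz : M.mulVec (fun k => r (Sum.inr k)) = fun k => r (Sum.inl k) := by
      have h2 := amulVec M r
      rw [hAr] at h2
      exact (sub_eq_zero.mp h2.symm).symm
    have hprod : ∀ k, (fun k => r (Sum.inr k)) k * M.mulVec (fun k => r (Sum.inr k)) k ≤ 0 := by
      intro k
      rw [congrFun hMz k]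
      show r (Sum.inr k) * r (Sum.inl k) ≤ 0
      by_cases h1 : Sum.inl k = i
      · have h1' : Sum.inr k = bar i := by rw [← h1]; rfl
        rw [h1', h1, hrbar, hri]
        nlinarith
      · by_cases h2 : Sum.inr k = i
        · have h2' : Sum.inl k = bar i := by rw [← h2]; rfl
          rw [h2', h2, hrbar, hri]
          nlinarith
        · have hk1 : Sum.inl k ≠ bar i := fun h => h2 (by rw [← bar_bar i, ← h]; rfl)
          have hk2 : Sum.inr k ≠ bar i := fun h => h1 (by rw [← bar_bar i, ← h]; rfl)
          rcases hB.2 k with h | h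
          · rw [hrsupp (Sum.inr k) h.2 hk2, zero_mul]
          · rw [hrsupp (Sum.inl k) h.2 hk1, mul_zero]
    have hall := hM _ hprod
    obtain ⟨k₀, hk⟩ : ∃ k, (Sum.inl k = i ∧ Sum.inr k = bar i) ∨
        (Sum.inr k = i ∧ Sum.inl k = bar i) := by
      cases i with
      | inl k => exact ⟨k, Or.inl ⟨rfl, rfl⟩⟩
      | inr k => exact ⟨k, Or.inr ⟨rfl, rfl⟩⟩
    have h0'' := hall k₀
    rw [congrFun hMz k₀] at h0''
    have h0 : r (Sum.inr k₀) * r (Sum.inl k₀) = 0 := h0''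
    rcases hk with ⟨ha, hb⟩ | ⟨ha, hb⟩
    · rw [ha, hb, hrbar, hri] at h0; nlinarith
    · rw [ha, hb, hrbar, hri] at h0; nlinarith
  exact ⟨r, hrsupp, hrbar, hAr, by rw [hri]; exact lt_of_le_of_ne hle hne⟩

end Key
section Relint
variable {n : ℕ}

lemma relint_pos {M : Matrix (Fin n) (Fin n) ℝ} {B : Finset (Fin n ⊕ Fin n)}
    (hB : IsBasis M B) {i : Fin n ⊕ Fin n} {y : Fin n → ℝ}
    (hy : y ∈ intrinsicInterior ℝ (coneOf M (B.erase i))) :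
    ∃ c, (∀ j, 0 ≤ c j) ∧ (∀ j ∉ B.erase i, c j = 0) ∧ y = (Amat M).mulVec c ∧
      ∀ j ∈ B.erase i, 0 < c j := by
  set F := coneOf M (B.erase i) with hF
  have hyF : y ∈ F := intrinsicInterior_subset hy
  obtain ⟨c, hc0, hcs, hcy⟩ := hyF
  refine ⟨c, hc0, hcs, hcy, ?_⟩
  intro j hj
  obtain ⟨x, hx, hxy⟩ := mem_intrinsicInterior.mp hy
  have h0F : (0 : Fin n → ℝ) ∈ F := zero_mem_cone M _
  have hcolF : (Amat M)ᵀ j ∈ F := col_mem_cone M hj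
  have hdir : (Amat M)ᵀ j ∈ (affineSpan ℝ F).direction := by
    have h := AffineSubspace.vsub_mem_direction (mem_affineSpan ℝ hcolF) (mem_affineSpan ℝ h0F)
    simpa using h
  have hmem : ∀ t : ℝ, y - t • (Amat M)ᵀ j ∈ affineSpan ℝ F := by
    intro t
    have hy' : y ∈ affineSpan ℝ F := hxy ▸ x.2
    have h := AffineSubspace.vadd_mem_of_mem_direction
      (Submodule.smul_mem _ (-t) hdir) hy'
    simpa [sub_eq_add_neg, neg_smul, add_comm] using h
  set φ : ℝ → (affineSpan ℝ F : AffineSubspace ℝ (Fin n → ℝ)) :=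
    fun t => ⟨y - t • (Amat M)ᵀ j, hmem t⟩ with hφdef
  have hφ : Continuous φ := by
    apply Continuous.subtype_mk
    exact continuous_const.sub (continuous_id.smul continuous_const)
  have hφ0 : φ 0 = x := Subtype.ext (by simp [hφdef, hxy])
  have hnb : φ ⁻¹' (interior ((↑) ⁻¹' F)) ∈ nhds (0 : ℝ) := by
    apply hφ.continuousAt.preimage_mem_nhds
    rw [hφ0]
    exact isOpen_interior.mem_nhds hx
  obtain ⟨ε, hε, hball⟩ := Metric.mem_nhds_iff.mp hnb
  have htball : (ε/2 : ℝ) ∈ Metric.ball (0:ℝ) ε := by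
    rw [Metric.mem_ball, Real.dist_eq, sub_zero, abs_of_pos (by linarith)]
    linarith
  have ht : φ (ε/2) ∈ ((↑) ⁻¹' F : Set (affineSpan ℝ F)) := interior_subset (hball htball)
  have hF2 : y - (ε/2) • (Amat M)ᵀ j ∈ F := ht
  obtain ⟨c₂, hc₂0, hc₂s, hc₂⟩ := hF2
  have hjB : j ∈ B := Finset.mem_of_mem_erase hj
  have heq : (Amat M).mulVec (c - fun j' => if j' = j then ε/2 else 0) = (Amat M).mulVec c₂ := by
    rw [Matrix.mulVec_sub, mulVec_ite, ← hcy, ← hc₂]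
  have hcc : (c - fun j' => if j' = j then ε/2 else 0) = c₂ := by
    apply repr_unique hB _ _ heq
    · intro j' hj'
      have h1 : c j' = 0 := hcs j' (fun h => hj' (Finset.mem_of_mem_erase h))
      have h2 : j' ≠ j := fun h => hj' (h ▸ hjB)
      simp [Pi.sub_apply, h1, h2]
    · intro j' hj'
      exact hc₂s j' (fun h => hj' (Finset.mem_of_mem_erase h))
  have h3 := congrFun hcc j
  simp only [Pi.sub_apply, if_pos rfl, if_true] at h3
  have h4 := hc₂0 j
  linarith

end Relint
theorem stmt_6 {n : ℕ} (M : Matrix (Fin n) (Fin n) ℝ) (hM : Suff M)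
    (B : Finset (Fin n ⊕ Fin n)) (hB : IsComplBasis M B)
    (i : Fin n ⊕ Fin n) (hi : i ∈ B)
    (hB' : IsBasis M (insert (bar i) (B.erase i))) :
    coneOf M B ∩ coneOf M (insert (bar i) (B.erase i)) = coneOf M (B.erase i) ∧
    Module.finrank ℝ (vectorSpan ℝ (coneOf M (B.erase i))) = n - 1 ∧
    ∀ B'' : Finset (Fin n ⊕ Fin n), IsComplBasis M B'' →
      B'' ≠ B → B'' ≠ insert (bar i) (B.erase i) →
      coneOf M B'' ∩ intrinsicInterior ℝ (coneOf M (B.erase i)) = ∅ := by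
  obtain ⟨r, hrs, hrb, hAr, hri⟩ := key_rel hM.1 hB hi hB'
  have hbarB : bar i ∉ B := fun h => not_both hB hi h
  have hiB' : i ∉ insert (bar i) (B.erase i) := by
    simp [Finset.mem_insert, Finset.mem_erase, Ne.symm (bar_ne i)]
  refine ⟨?_, ?_, ?_⟩
  · -- Part 1
    apply Set.eq_of_subset_of_subset
    · rintro y ⟨⟨c, hc0, hcs, hcy⟩, ⟨c', hc'0, hc's, hc'y⟩⟩
      have hc'i : c' i = 0 := hc's i hiB'
      have hes : ∀ j ∉ B, ((c - c') - c' (bar i) • r) j = 0 := by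
        intro j hj
        have hcj : c j = 0 := hcs j hj
        by_cases hjb : j = bar i
        · subst hjb
          simp only [Pi.sub_apply, Pi.smul_apply, smul_eq_mul, hcj, hrb]
          ring
        · have hc'j : c' j = 0 := by
            apply hc's
            simp only [Finset.mem_insert, Finset.mem_erase]
            push_neg
            exact ⟨hjb, fun _ => hj⟩
          simp only [Pi.sub_apply, Pi.smul_apply, smul_eq_mul, hcj, hc'j, hrs j hj hjb]
          ring
      have hAe : (Amat M).mulVec ((c - c') - c' (bar i) • r) = 0 := by
        rw [Matrix.mulVec_sub, Matrix.mulVec_sub, Matrix.mulVec_smul, ← hcy, ← hc'y,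
          hAr, sub_self, smul_zero, sub_zero]
      have he0 := basis_supp_zero hB.1 hes hAe
      have hei := congrFun he0 i
      simp only [Pi.sub_apply, Pi.smul_apply, smul_eq_mul, Pi.zero_apply, hc'i] at hei
      have hmul : c' (bar i) * r i ≤ 0 :=
        mul_nonpos_of_nonneg_of_nonpos (hc'0 (bar i)) (le_of_lt hri)
      have hci : c i = 0 := by linarith [hc0 i]
      refine ⟨c, hc0, ?_, hcy⟩
      intro j hj
      by_cases h : j = i
      · rw [h]; exact hci
      · exact hcs j (fun hjB => hj (Finset.mem_erase.mpr ⟨h, hjB⟩))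
    · intro y hy
      exact ⟨cone_mono M (Finset.erase_subset _ _) hy,
        cone_mono M (Finset.subset_insert _ _) hy⟩
  · -- Part 2
    have hsub : LinearIndependent ℝ (fun j : (B.erase i) => (Amat M)ᵀ (j : Fin n ⊕ Fin n)) := by
      have hcomp : (fun j : (B.erase i) => (Amat M)ᵀ (j : Fin n ⊕ Fin n)) =
          (fun j : B => (Amat M)ᵀ (j : Fin n ⊕ Fin n)) ∘
            (fun j : (B.erase i) => (⟨j, Finset.mem_of_mem_erase j.2⟩ : B)) := rfl
      rw [hcomp]
      apply hB.1.2.comp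
      intro a b hab
      simp only [Subtype.mk.injEq] at hab
      exact Subtype.ext hab
    have hFspan : ∀ z ∈ coneOf M (B.erase i), z ∈ Submodule.span ℝ
        (Set.range (fun j : (B.erase i) => (Amat M)ᵀ (j : Fin n ⊕ Fin n))) := by
      rintro z ⟨c, hc0, hcs, rfl⟩
      rw [sum_subtype M _ c hcs]
      exact Submodule.sum_mem _
        (fun j _ => Submodule.smul_mem _ _ (Submodule.subset_span ⟨j, rfl⟩))
    have hvs : vectorSpan ℝ (coneOf M (B.erase i)) = Submodule.span ℝ
        (Set.range (fun j : (B.erase i) => (Amat M)ᵀ (j : Fin n ⊕ Fin n))) := by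
      apply le_antisymm
      · rw [vectorSpan_def]
        apply Submodule.span_le.mpr
        rintro x ⟨a, ha, b, hb, rfl⟩
        exact Submodule.sub_mem _ (hFspan a ha) (hFspan b hb)
      · apply Submodule.span_le.mpr
        rintro x ⟨j, rfl⟩
        have h := vsub_mem_vectorSpan ℝ (col_mem_cone M j.2) (zero_mem_cone M (B.erase i))
        simpa using h
    rw [hvs, finrank_span_eq_card hsub, Fintype.card_coe, Finset.card_erase_of_mem hi, hB.1.1]
  · -- Part 3
    intro B'' hB'' hne hne'
    rw [Set.eq_empty_iff_forall_notMem]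
    rintro y ⟨hyB'', hyI⟩
    obtain ⟨c, hc0, hcs, hcy, hcpos⟩ := relint_pos hB.1 hyI
    obtain ⟨c'', h''0, h''s, h''y⟩ := hyB''
    have hn : 1 ≤ n := by
      cases i with
      | inl k => exact k.pos
      | inr k => exact k.pos
    obtain ⟨j₁, hj₁e, hj₁n⟩ : ∃ j₁, j₁ ∈ B.erase i ∧ j₁ ∉ B'' := by
      by_contra hcon
      push_neg at hcon
      by_cases hiB'' : i ∈ B''
      · refine hne ?_
        refine (Finset.eq_of_subset_of_card_le ?_ ?_).symm
        · intro j hj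
          by_cases h : j = i
          · rw [h]; exact hiB''
          · exact hcon j (Finset.mem_erase.mpr ⟨h, hj⟩)
        · rw [hB''.1.1, hB.1.1]
      · have hbar'' : bar i ∈ B'' := (one_of_pair hB'' i).resolve_left hiB''
        refine hne' ?_
        refine (Finset.eq_of_subset_of_card_le ?_ ?_).symm
        · rw [Finset.insert_subset_iff]
          exact ⟨hbar'', fun j hj => hcon j hj⟩
        · rw [hB''.1.1, Finset.card_insert_of_notMem
            (fun h => hbarB (Finset.mem_of_mem_erase h)),
            Finset.card_erase_of_mem hi, hB.1.1]
          omega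
    have hAg : (Amat M).mulVec (c - c'') = 0 := by
      rw [Matrix.mulVec_sub, ← hcy, ← h''y, sub_self]
    have hMz : M.mulVec (fun k => (c - c'') (Sum.inr k)) = fun k => (c - c'') (Sum.inl k) := by
      have h2 := amulVec M (c - c'')
      rw [hAg] at h2
      exact (sub_eq_zero.mp h2.symm).symm
    have hcc : ∀ k, c (Sum.inl k) * c (Sum.inr k) = 0 := by
      intro k
      rcases hB.2 k with h | h
      · rw [hcs (Sum.inr k) (fun hm => h.2 (Finset.mem_of_mem_erase hm)), mul_zero]
      · rw [hcs (Sum.inl k) (fun hm => h.2 (Finset.mem_of_mem_erase hm)), zero_mul]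
    have hcc'' : ∀ k, c'' (Sum.inl k) * c'' (Sum.inr k) = 0 := by
      intro k
      rcases hB''.2 k with h | h
      · rw [h''s (Sum.inr k) h.2, mul_zero]
      · rw [h''s (Sum.inl k) h.2, zero_mul]
    have hprod : ∀ k, (fun k => (c - c'') (Sum.inr k)) k *
        M.mulVec (fun k => (c - c'') (Sum.inr k)) k ≤ 0 := by
      intro k
      rw [congrFun hMz k]
      show (c - c'') (Sum.inr k) * (c - c'') (Sum.inl k) ≤ 0
      simp only [Pi.sub_apply]
      nlinarith [mul_nonneg (hc0 (Sum.inl k)) (h''0 (Sum.inr k)),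
        mul_nonneg (hc0 (Sum.inr k)) (h''0 (Sum.inl k)), hcc k, hcc'' k]
    have hz0 := hM.1 _ hprod
    have both : ∀ k, c (Sum.inl k) * c'' (Sum.inr k) = 0 ∧
        c (Sum.inr k) * c'' (Sum.inl k) = 0 := by
      intro k
      have h1 := hz0 k
      rw [congrFun hMz k] at h1
      have h1' : (c - c'') (Sum.inr k) * (c - c'') (Sum.inl k) = 0 := h1
      simp only [Pi.sub_apply] at h1'
      have hexp : c (Sum.inr k) * c'' (Sum.inl k) + c'' (Sum.inr k) * c (Sum.inl k) = 0 := by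
        linear_combination hcc k + hcc'' k - h1'
      have n1 : 0 ≤ c (Sum.inr k) * c'' (Sum.inl k) := mul_nonneg (hc0 _) (h''0 _)
      have n2 : 0 ≤ c'' (Sum.inr k) * c (Sum.inl k) := mul_nonneg (h''0 _) (hc0 _)
      constructor
      · rw [mul_comm]; linarith
      · linarith
    have hkey : ∀ j, c j * c'' (bar j) = 0 := by
      intro j
      cases j with
      | inl k => exact (both k).1
      | inr k => exact (both k).2
    have h''supp : ∀ j, c'' j ≠ 0 → j = i ∨ j = bar i ∨ j ∈ B.erase i := by
      intro j hcj
      by_cases h1 : j = i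
      · exact Or.inl h1
      by_cases h2 : j = bar i
      · exact Or.inr (Or.inl h2)
      refine Or.inr (Or.inr ?_)
      rcases one_of_pair hB j with hjB | hbjB
      · exact Finset.mem_erase.mpr ⟨h1, hjB⟩
      · exfalso
        have hbne : bar j ≠ i := fun h => h2 (by rw [← h, bar_bar])
        have hpos : 0 < c (bar j) := hcpos _ (Finset.mem_erase.mpr ⟨hbne, hbjB⟩)
        have hk := hkey (bar j)
        rw [bar_bar] at hk
        rcases mul_eq_zero.mp hk with h | h
        · exact absurd h (ne_of_gt hpos)
        · exact hcj h
    have h''bar : c'' (bar i) = 0 := by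
      by_contra hbne0
      have hbB'' : bar i ∈ B'' := by
        by_contra h; exact hbne0 (h''s _ h)
      have hiB''n : i ∉ B'' := fun h => not_both hB'' h hbB''
      have h''i : c'' i = 0 := h''s i hiB''n
      have hesupp : ∀ j ∉ B, ((c - c'') - c'' (bar i) • r) j = 0 := by
        intro j hj
        have hcj : c j = 0 := hcs j (fun h => hj (Finset.mem_of_mem_erase h))
        by_cases hjb : j = bar i
        · subst hjb
          simp only [Pi.sub_apply, Pi.smul_apply, smul_eq_mul, hcj, hrb]
          ring
        · have hcj'' : c'' j = 0 := by
            by_contra hne0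
            rcases h''supp j hne0 with h | h | h
            · exact hj (by rw [h]; exact hi)
            · exact hjb h
            · exact hj (Finset.mem_of_mem_erase h)
          simp only [Pi.sub_apply, Pi.smul_apply, smul_eq_mul, hcj, hcj'', hrs j hj hjb]
          ring
      have hAe : (Amat M).mulVec ((c - c'') - c'' (bar i) • r) = 0 := by
        rw [Matrix.mulVec_sub, Matrix.mulVec_smul, hAg, hAr, smul_zero, sub_zero]
      have he0 := basis_supp_zero hB.1 hesupp hAe
      have hei := congrFun he0 i
      simp only [Pi.sub_apply, Pi.smul_apply, smul_eq_mul, Pi.zero_apply] at hei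
      have hci : c i = 0 := hcs i (fun h => (Finset.mem_erase.mp h).1 rfl)
      rw [hci, h''i] at hei
      have hz : c'' (bar i) * r i = 0 := by linarith
      rcases mul_eq_zero.mp hz with h | h
      · exact hbne0 h
      · exact absurd h (ne_of_lt hri)
    have h''suppB : ∀ j ∉ B, c'' j = 0 := by
      intro j hj
      by_contra hne0
      rcases h''supp j hne0 with h | h | h
      · exact hj (by rw [h]; exact hi)
      · exact hne0 (by rw [h]; exact h''bar)
      · exact hj (Finset.mem_of_mem_erase h)
    have hceq : c = c'' := repr_unique hB.1
      (fun j hj => hcs j (fun h => hj (Finset.mem_of_mem_erase h))) h''suppB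
      (by rw [← hcy, ← h''y])
    have h1 := hcpos j₁ hj₁e
    have h2 : c'' j₁ = 0 := h''s j₁ hj₁n
    rw [hceq, h2] at h1
    exact lt_irrefl 0 h1
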